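/- Let f ∈ R̄[x] be a tropical polynomial with leading coefficient b_d ≠ ∞, and let g = b_d ⊙ ∏_{i=1}^s (x ⊕ a_i)^{m_i} be the tropical polynomial with the same tropical roots a_i with multiplicities m_i (the least-coefficient functional representative of f). Then g ⊙ f = g ⊙ g as tropical polynomials. -/

import Mathlib

open Polynomial

/-- The tropical semiring `ℝ ∪ {∞}` with `⊕ = min` and `⊙ = +`. -/
abbrev TropR : Type := Tropical (WithTop ℝ)

/-- Classical scaling of an element of `ℝ ∪ {∞}` by a real number (with `r·∞ = ∞`). -/
noncomputable def scl (r : ℝ) : WithTop ℝ → WithTop ℝ := WithTop.map fun t => r * t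

/-- The coefficients `c_j` of the least-coefficient functional representative `g` of a
tropical polynomial with coefficients `b₀,…,b_d`:
`c_j = min({b_j} ∪ {(b_i(k−j) + b_k(j−i))/(k−i) : 0 ≤ i < j < k ≤ d})`. -/
noncomputable def leastCoeff (b : ℕ → WithTop ℝ) (d j : ℕ) : WithTop ℝ :=
  min (b j)
    ((Finset.range (d + 1) ×ˢ Finset.range (d + 1)).inf fun ik =>
      if ik.1 < j ∧ j < ik.2 then
        scl ((ik.2 : ℝ) - (ik.1 : ℝ))⁻¹
          (scl ((ik.2 : ℝ) - (j : ℝ)) (b ik.1) + scl ((j : ℝ) - (ik.1 : ℝ)) (b ik.2))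
      else ⊤)

namespace TropAux

lemma coeff_sum_trop (c : ℕ → WithTop ℝ) (d i : ℕ) :
    (∑ j ∈ Finset.range (d + 1), C (Tropical.trop (c j)) * X ^ j : TropR[X]).coeff i =
      Tropical.trop (if i ≤ d then c i else ⊤) := by
  rw [Polynomial.finset_sum_coeff]
  simp only [Polynomial.coeff_C_mul, Polynomial.coeff_X_pow, mul_ite, mul_one, mul_zero]
  rw [Finset.sum_ite_eq (Finset.range (d + 1)) i fun j => Tropical.trop (c j)]
  by_cases h : i ≤ d
  · rw [if_pos (Finset.mem_range.mpr (by omega)), if_pos h]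
  · rw [if_neg (by simp [Finset.mem_range]; omega), if_neg h, Tropical.trop_top]

noncomputable def lineV (p k : ℕ) (β γ : ℝ) (t : ℝ) : ℝ :=
  ((k:ℝ) - (p:ℝ))⁻¹ * (((k:ℝ) - t) * β + (t - (p:ℝ)) * γ)

lemma scl_coe (r u : ℝ) : scl r (u : WithTop ℝ) = ((r * u : ℝ) : WithTop ℝ) := rfl

lemma term_eq_line (p k t : ℕ) (β γ : ℝ) (b : ℕ → WithTop ℝ)
    (hbp : b p = (β : WithTop ℝ)) (hbk : b k = (γ : WithTop ℝ)) :
    (scl ((k : ℝ) - (p : ℝ))⁻¹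
        (scl ((k : ℝ) - (t : ℝ)) (b p) + scl ((t : ℝ) - (p : ℝ)) (b k)))
      = ((lineV p k β γ t : ℝ) : WithTop ℝ) := by
  rw [hbp, hbk, scl_coe, scl_coe, ← WithTop.coe_add, scl_coe, lineV]

lemma leastCoeff_le (b : ℕ → WithTop ℝ) (d j : ℕ) : leastCoeff b d j ≤ b j :=
  min_le_left _ _

lemma leastCoeff_le_line (b : ℕ → WithTop ℝ) (d p k t : ℕ) (β γ : ℝ)
    (hbp : b p = (β : WithTop ℝ)) (hbk : b k = (γ : WithTop ℝ))
    (hpk : p < k) (hpt : p ≤ t) (htk : t ≤ k) (hkd : k ≤ d) :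
    leastCoeff b d t ≤ ((lineV p k β γ t : ℝ) : WithTop ℝ) := by
  have hkp : (k:ℝ) - (p:ℝ) ≠ 0 := by
    have : (p:ℝ) < (k:ℝ) := by exact_mod_cast hpk
    linarith
  rcases eq_or_lt_of_le hpt with h | hpt'
  · subst h
    have h' : lineV p k β γ (p:ℝ) = β := by
      rw [lineV, sub_self, zero_mul, add_zero, ← mul_assoc, inv_mul_cancel₀ hkp, one_mul]
    rw [h', ← hbp]; exact leastCoeff_le b d p
  rcases eq_or_lt_of_le htk with h | htk'
  · subst h
    have h' : lineV p t β γ (t:ℝ) = γ := by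
      have hkp' : (t:ℝ) - (p:ℝ) ≠ 0 := by
        have : (p:ℝ) < (t:ℝ) := by exact_mod_cast hpt'
        linarith
      rw [lineV, sub_self, zero_mul, zero_add, ← mul_assoc, inv_mul_cancel₀ hkp', one_mul]
    rw [h', ← hbk]; exact leastCoeff_le b d t
  · refine le_trans (min_le_right _ _) ?_
    refine le_trans (Finset.inf_le (b := (p, k)) ?_) ?_
    · simp [Finset.mem_product, Finset.mem_range]
      omega
    · rw [if_pos ⟨hpt', htk'⟩]
      rw [term_eq_line p k t β γ b hbp hbk]

lemma key (b : ℕ → WithTop ℝ) (d j : ℕ) (h : leastCoeff b d j < b j) :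
    0 < j ∧ j < d ∧
      leastCoeff b d (j - 1) + leastCoeff b d (j + 1) ≤
        leastCoeff b d j + leastCoeff b d j := by
  set I := ((Finset.range (d + 1) ×ˢ Finset.range (d + 1)).inf fun ik =>
      if ik.1 < j ∧ j < ik.2 then
        scl ((ik.2 : ℝ) - (ik.1 : ℝ))⁻¹
          (scl ((ik.2 : ℝ) - (j : ℝ)) (b ik.1) + scl ((j : ℝ) - (ik.1 : ℝ)) (b ik.2))
      else ⊤) with hIdef
  have hmin : leastCoeff b d j = min (b j) I := rfl
  have hI : I < b j := by
    rcases min_lt_iff.mp (hmin ▸ h) with h' | h'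
    · exact absurd h' (lt_irrefl _)
    · exact h'
  have hCj : leastCoeff b d j = I := by rw [hmin, min_eq_right hI.le]
  have hItop : I ≠ ⊤ := (hI.trans_le le_top).ne
  obtain ⟨ik, hmem, hEq⟩ := Finset.exists_mem_eq_inf
    (Finset.range (d + 1) ×ˢ Finset.range (d + 1)) ⟨(0,0), by simp⟩
    (fun ik => if ik.1 < j ∧ j < ik.2 then
        scl ((ik.2 : ℝ) - (ik.1 : ℝ))⁻¹
          (scl ((ik.2 : ℝ) - (j : ℝ)) (b ik.1) + scl ((j : ℝ) - (ik.1 : ℝ)) (b ik.2))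
      else ⊤)
  rw [← hIdef] at hEq
  obtain ⟨p, k⟩ := ik
  have hcond : p < j ∧ j < k := by
    by_contra hc
    rw [if_neg hc] at hEq
    exact hItop hEq
  rw [if_pos hcond] at hEq
  simp only [Finset.mem_product, Finset.mem_range] at hmem
  have hkd : k ≤ d := by omega
  -- b p and b k are finite
  have hbp : ∃ β : ℝ, b p = (β : WithTop ℝ) := by
    rcases Option.eq_none_or_eq_some (b p) with h' | ⟨β, h'⟩
    · exfalso; apply hItop
      rw [hEq]
      have : scl ((k : ℝ) - (j : ℝ)) (b p) = ⊤ := by rw [h']; rfl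
      rw [this]
      simp [scl]
    · exact ⟨β, h'⟩
  have hbk : ∃ γ : ℝ, b k = (γ : WithTop ℝ) := by
    rcases Option.eq_none_or_eq_some (b k) with h' | ⟨γ, h'⟩
    · exfalso; apply hItop
      rw [hEq]
      have : scl ((j : ℝ) - (p : ℝ)) (b k) = ⊤ := by rw [h']; rfl
      rw [this]
      simp [scl]
    · exact ⟨γ, h'⟩
  obtain ⟨β, hbp⟩ := hbp
  obtain ⟨γ, hbk⟩ := hbk
  have hIline : I = ((lineV p k β γ j : ℝ) : WithTop ℝ) := by
    rw [hEq, term_eq_line p k j β γ b hbp hbk]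
  have hpk : p < k := hcond.1.trans hcond.2
  refine ⟨by omega, by omega, ?_⟩
  have h1 : leastCoeff b d (j - 1) ≤ ((lineV p k β γ ((j:ℝ) - 1) : ℝ) : WithTop ℝ) := by
    have := leastCoeff_le_line b d p k (j - 1) β γ hbp hbk hpk (by omega) (by omega) hkd
    have hc : ((j - 1 : ℕ) : ℝ) = (j : ℝ) - 1 := by
      have : 1 ≤ j := hcond.1.trans_le' (by omega)
      push_cast [this]; ring
    rwa [hc] at this
  have h2 : leastCoeff b d (j + 1) ≤ ((lineV p k β γ ((j:ℝ) + 1) : ℝ) : WithTop ℝ) := by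
    have := leastCoeff_le_line b d p k (j + 1) β γ hbp hbk hpk (by omega) (by omega) hkd
    have hc : ((j + 1 : ℕ) : ℝ) = (j : ℝ) + 1 := by push_cast; ring
    rwa [hc] at this
  calc leastCoeff b d (j - 1) + leastCoeff b d (j + 1)
      ≤ ((lineV p k β γ ((j:ℝ) - 1) : ℝ) : WithTop ℝ)
        + ((lineV p k β γ ((j:ℝ) + 1) : ℝ) : WithTop ℝ) := add_le_add h1 h2
    _ = ((lineV p k β γ (j:ℝ) + lineV p k β γ (j:ℝ) : ℝ) : WithTop ℝ) := by
        rw [← WithTop.coe_add]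
        congr 1
        unfold lineV; ring
    _ = leastCoeff b d j + leastCoeff b d j := by
        rw [WithTop.coe_add, hCj, hIline]



/-- extended coefficient sequences -/
noncomputable def Cex (b : ℕ → WithTop ℝ) (d i : ℕ) : WithTop ℝ :=
  if i ≤ d then leastCoeff b d i else ⊤

noncomputable def Bex (b : ℕ → WithTop ℝ) (d i : ℕ) : WithTop ℝ :=
  if i ≤ d then b i else ⊤

lemma Cex_le_Bex (b : ℕ → WithTop ℝ) (d i : ℕ) : Cex b d i ≤ Bex b d i := by
  unfold Cex Bex; split_ifs
  · exact leastCoeff_le b d i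
  · exact le_rfl

lemma inf_eq (b : ℕ → WithTop ℝ) (d n : ℕ) :
    ((Finset.HasAntidiagonal.antidiagonal n).inf fun p => Cex b d p.1 + Bex b d p.2) =
      (Finset.HasAntidiagonal.antidiagonal n).inf fun p => Cex b d p.1 + Cex b d p.2 := by
  refine le_antisymm ?_ (Finset.inf_mono_fun fun p _ => add_le_add_right (Cex_le_Bex b d p.2) _)
  set D := (Finset.HasAntidiagonal.antidiagonal n).inf fun p => Cex b d p.1 + Cex b d p.2 with hD
  rcases eq_or_ne D ⊤ with hDtop | hDtop
  · rw [hDtop]; exact le_top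
  -- the set of minimizers
  set S := (Finset.HasAntidiagonal.antidiagonal n).filter (fun p => Cex b d p.1 + Cex b d p.2 = D) with hS
  have hSne : S.Nonempty := by
    obtain ⟨p, hp, hEq⟩ := Finset.exists_mem_eq_inf (Finset.HasAntidiagonal.antidiagonal n)
      ⟨(0, n), by simp⟩ (fun p => Cex b d p.1 + Cex b d p.2)
    exact ⟨p, Finset.mem_filter.mpr ⟨hp, hEq.symm⟩⟩
  obtain ⟨⟨x, y⟩, hxyS, hmin⟩ := Finset.exists_min_image S (fun p => p.1) hSne
  have hxy : x + y = n := Finset.HasAntidiagonal.mem_antidiagonal.mp (Finset.mem_filter.mp hxyS).1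
  have hDval : Cex b d x + Cex b d y = D := (Finset.mem_filter.mp hxyS).2
  by_cases h1 : Cex b d x = Bex b d x
  · calc ((Finset.HasAntidiagonal.antidiagonal n).inf fun p => Cex b d p.1 + Bex b d p.2)
        ≤ Cex b d y + Bex b d x :=
          Finset.inf_le (b := (y, x)) (Finset.HasAntidiagonal.mem_antidiagonal.mpr (by omega))
      _ = D := by rw [← h1, add_comm, hDval]
  by_cases h2 : Cex b d y = Bex b d y
  · calc ((Finset.HasAntidiagonal.antidiagonal n).inf fun p => Cex b d p.1 + Bex b d p.2)
        ≤ Cex b d x + Bex b d y :=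
          Finset.inf_le (b := (x, y)) (Finset.HasAntidiagonal.mem_antidiagonal.mpr hxy)
      _ = D := by rw [← h2, hDval]
  · exfalso
    have hxd : x ≤ d := by
      by_contra hxd
      exact h1 (by unfold Cex Bex; rw [if_neg hxd, if_neg hxd])
    have hyd : y ≤ d := by
      by_contra hyd
      exact h2 (by unfold Cex Bex; rw [if_neg hyd, if_neg hyd])
    have hx' : leastCoeff b d x < b x := by
      have := leastCoeff_le b d x
      rcases this.lt_or_eq with h | h
      · exact h
      · exact absurd (by unfold Cex Bex; rw [if_pos hxd, if_pos hxd, h]) h1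
    have hy' : leastCoeff b d y < b y := by
      have := leastCoeff_le b d y
      rcases this.lt_or_eq with h | h
      · exact h
      · exact absurd (by unfold Cex Bex; rw [if_pos hyd, if_pos hyd, h]) h2
    obtain ⟨hx0, hxd', hxkey⟩ := key b d x hx'
    obtain ⟨hy0, hyd', hykey⟩ := key b d y hy'
    have hCx : ∀ i, i ≤ d → Cex b d i = leastCoeff b d i := fun i hi => by
      unfold Cex; rw [if_pos hi]
    -- the two neighbouring pairs
    have hPmem : (x - 1, y + 1) ∈ Finset.HasAntidiagonal.antidiagonal n :=
      Finset.HasAntidiagonal.mem_antidiagonal.mpr (by omega)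
    have hQmem : (x + 1, y - 1) ∈ Finset.HasAntidiagonal.antidiagonal n :=
      Finset.HasAntidiagonal.mem_antidiagonal.mpr (by omega)
    set P := Cex b d (x - 1) + Cex b d (y + 1) with hP
    set Q := Cex b d (x + 1) + Cex b d (y - 1) with hQ
    have hDP : D < P := by
      rcases lt_or_eq_of_le (Finset.inf_le hPmem : D ≤ P) with h | h
      · exact h
      · exfalso
        have : (x - 1, y + 1) ∈ S := Finset.mem_filter.mpr ⟨hPmem, h.symm⟩
        have := hmin _ this
        simp only at this
        omega
    have hDQ : D ≤ Q := Finset.inf_le hQmem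
    have hPQ : P + Q ≤ D + D := by
      rw [hP, hQ, ← hDval]
      rw [hCx _ (by omega), hCx _ (by omega), hCx _ (by omega), hCx _ (by omega),
        hCx _ hxd, hCx _ hyd]
      calc leastCoeff b d (x - 1) + leastCoeff b d (y + 1) +
            (leastCoeff b d (x + 1) + leastCoeff b d (y - 1))
          = (leastCoeff b d (x - 1) + leastCoeff b d (x + 1)) +
            (leastCoeff b d (y - 1) + leastCoeff b d (y + 1)) := by
              rw [add_add_add_comm, add_comm (leastCoeff b d (y + 1))]
        _ ≤ (leastCoeff b d x + leastCoeff b d x) +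
            (leastCoeff b d y + leastCoeff b d y) := add_le_add hxkey hykey
        _ = leastCoeff b d x + leastCoeff b d y +
            (leastCoeff b d x + leastCoeff b d y) := by rw [add_add_add_comm]
    have : D + D < P + Q := WithTop.add_lt_add_of_lt_of_le hDtop hDP hDQ
    exact absurd (this.trans_le hPQ) (lt_irrefl _)

end TropAux

/-- Let `f = ⊕_{i≤d} b_i ⊙ xⁱ` be a tropical polynomial with leading coefficient
`b_d ≠ ∞` and let `g = ⊕_{j≤d} c_j ⊙ xʲ` be its least-coefficient functional
representative (equivalently `g = b_d ⊙ ∏ (x ⊕ a_i)^{m_i}` over the tropical roots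
`a_i` of `f` with multiplicities `m_i`).  Then `g ⊙ f = g ⊙ g` as tropical
polynomials. -/
theorem mul_leastRepresentative_eq_sq (d : ℕ) (b : ℕ → WithTop ℝ) (hb : b d ≠ ⊤) :
    (∑ j ∈ Finset.range (d + 1), C (Tropical.trop (leastCoeff b d j)) * X ^ j) *
        (∑ i ∈ Finset.range (d + 1), C (Tropical.trop (b i)) * X ^ i) =
      (∑ j ∈ Finset.range (d + 1), C (Tropical.trop (leastCoeff b d j)) * X ^ j) *
        (∑ j ∈ Finset.range (d + 1), C (Tropical.trop (leastCoeff b d j)) * X ^ j) := by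
  have hcoeff := TropAux.coeff_sum_trop
  ext n
  rw [Polynomial.coeff_mul, Polynomial.coeff_mul]
  have lhs : ∀ (e : ℕ → WithTop ℝ),
      (∑ p ∈ Finset.HasAntidiagonal.antidiagonal n,
        (∑ j ∈ Finset.range (d + 1), C (Tropical.trop (leastCoeff b d j)) * X ^ j :
            TropR[X]).coeff p.1 *
        (∑ j ∈ Finset.range (d + 1), C (Tropical.trop (e j)) * X ^ j : TropR[X]).coeff p.2) =
      Tropical.trop ((Finset.HasAntidiagonal.antidiagonal n).inf fun p =>
        TropAux.Cex b d p.1 + TropAux.Bex e d p.2) := by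
    intro e
    rw [Finset.trop_inf]
    refine Finset.sum_congr rfl fun p _ => ?_
    rw [hcoeff, hcoeff, ← Tropical.trop_add]
    rfl
  rw [lhs b, lhs (leastCoeff b d)]
  congr 1
  rw [show (fun p : ℕ × ℕ => TropAux.Cex b d p.1 + TropAux.Bex (leastCoeff b d) d p.2) =
      (fun p : ℕ × ℕ => TropAux.Cex b d p.1 + TropAux.Cex b d p.2) from rfl]
  exact TropAux.inf_eq b d n
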